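/- Let H be a bipartite graph of radius three, let u be a central vertex of H, and let δ′(H) = min over central vertices x of the minimum cardinality of a set A ⊆ N_H(x) that dominates the set of vertices at distance exactly 2 from x. Then dim_l(K_1 + H) ≤ δ′(H) + 1, with equality if and only if the vertex of K_1 belongs to some local metric basis for K_1 + H. -/

import Mathlib

open SimpleGraph

/-- A set `S` is a local metric generator for `G` if every pair of adjacent
vertices is distinguished (by distance) by some element of `S`. -/
def IsLocalMetricGenerator {α : Type*} (G : SimpleGraph α) (S : Set α) : Prop :=
  ∀ x y : α, G.Adj x y → ∃ v ∈ S, G.dist v x ≠ G.dist v y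

/-- The local metric dimension of a graph. -/
noncomputable def localMetricDim {α : Type*} (G : SimpleGraph α) : ℕ :=
  sInf {k | ∃ S : Finset α, S.card = k ∧ IsLocalMetricGenerator G ↑S}

/-- A local metric basis: a minimum-cardinality local metric generator. -/
def IsLocalMetricBasis {α : Type*} (G : SimpleGraph α) (S : Finset α) : Prop :=
  IsLocalMetricGenerator G ↑S ∧ S.card = localMetricDim G

/-- The corona product `G ⊙ H`. -/
def corona {α β : Type*} (G : SimpleGraph α) (H : SimpleGraph β) :
    SimpleGraph (α ⊕ α × β) :=
  SimpleGraph.fromRel (fun x y => match x, y with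
    | Sum.inl a, Sum.inl a' => G.Adj a a'
    | Sum.inl a, Sum.inr p => a = p.1
    | Sum.inr p, Sum.inl a => a = p.1
    | Sum.inr p, Sum.inr q => p.1 = q.1 ∧ H.Adj p.2 q.2)

/-- The join `K₁ + H`; the vertex of `K₁` is `none`. -/
def joinK1 {β : Type*} (H : SimpleGraph β) : SimpleGraph (Option β) :=
  SimpleGraph.fromRel (fun x y => match x, y with
    | none, some _ => True
    | some b, some b' => H.Adj b b'
    | _, _ => False)

/-- Eccentricity of a vertex (in `ℕ∞`). -/
noncomputable def ecc {α : Type*} (G : SimpleGraph α) (x : α) : ℕ∞ :=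
  ⨆ y, G.edist x y

/-- Radius of a graph (in `ℕ∞`). -/
noncomputable def gradius {α : Type*} (G : SimpleGraph α) : ℕ∞ :=
  ⨅ x, ecc G x

/-- Diameter of a graph (in `ℕ∞`). -/
noncomputable def gdiam {α : Type*} (G : SimpleGraph α) : ℕ∞ :=
  ⨆ x, ecc G x

/-- `δ'(H)`: minimum over central vertices `x` of the minimum size of a subset of `N(x)`
dominating the set of vertices at distance exactly 2 from `x`. -/
noncomputable def deltaPrime {β : Type*} (H : SimpleGraph β) : ℕ :=
  sInf {k | ∃ x : β, ecc H x = gradius H ∧ ∃ A : Finset β, A.card = k ∧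
    (∀ a ∈ A, H.Adj x a) ∧ ∀ w : β, H.edist x w = 2 → w ∉ A → ∃ a ∈ A, H.Adj a w}


section Aux

variable {β : Type*} {H : SimpleGraph β}

lemma jadj_ns (b : β) : (joinK1 H).Adj none (some b) := by
  rw [joinK1, fromRel_adj]; exact ⟨by simp, Or.inl trivial⟩

lemma jadj_ss {a b : β} : (joinK1 H).Adj (some a) (some b) ↔ H.Adj a b := by
  rw [joinK1, fromRel_adj]
  constructor
  · rintro ⟨-, h | h⟩; exact h; exact h.symm
  · intro h; exact ⟨by simpa using h.ne, Or.inl h⟩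

lemma jnadj_nn : ¬ (joinK1 H).Adj none none := by
  rw [joinK1, fromRel_adj]; simp

lemma jdist_ns (b : β) : (joinK1 H).dist none (some b) = 1 :=
  dist_eq_one_iff_adj.mpr (jadj_ns b)

lemma jdist_sn (b : β) : (joinK1 H).dist (some b) none = 1 := by
  rw [dist_comm]; exact jdist_ns b

lemma jdist_ss_adj {a b : β} (h : H.Adj a b) : (joinK1 H).dist (some a) (some b) = 1 :=
  dist_eq_one_iff_adj.mpr (jadj_ss.mpr h)

lemma jdist_ss_two {a b : β} (hne : a ≠ b) (h : ¬ H.Adj a b) :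
    (joinK1 H).dist (some a) (some b) = 2 := by
  have hw : ((joinK1 H).Walk (some a) (some b)) :=
    Walk.cons ((jadj_ns a).symm) (Walk.cons (jadj_ns b) Walk.nil)
  have hle : (joinK1 H).dist (some a) (some b) ≤ 2 := by
    have := dist_le (Walk.cons ((jadj_ns (H := H) a).symm) (Walk.cons (jadj_ns b) Walk.nil))
    simpa using this
  have hr : (joinK1 H).Reachable (some a) (some b) := ⟨hw⟩
  have h0 : (joinK1 H).dist (some a) (some b) ≠ 0 := fun h' =>
    hne (by simpa using hr.dist_eq_zero_iff.mp h')
  have h1 : (joinK1 H).dist (some a) (some b) ≠ 1 := fun h' =>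
    h (jadj_ss.mp (dist_eq_one_iff_adj.mp h'))
  omega

/-- bipartite ⟹ triangle-free -/
lemma tri_free (C : H.Coloring (Fin 2)) {a b c : β}
    (hab : H.Adj a b) (hac : H.Adj a c) (hbc : H.Adj b c) : False := by
  have h1 := C.valid hab
  have h2 := C.valid hac
  have h3 := C.valid hbc
  have : ∀ x y z : Fin 2, x ≠ y → x ≠ z → y ≠ z → False := by decide
  exact this _ _ _ h1 h2 h3

/-- key characterization: `some a` distinguishes the edge `bb'` iff `a ∈ N[b] ∪ N[b']`. -/
lemma key (C : H.Coloring (Fin 2)) {b b' : β} (hbb' : H.Adj b b') (a : β) :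
    (joinK1 H).dist (some a) (some b) ≠ (joinK1 H).dist (some a) (some b') ↔
      (a = b ∨ a = b' ∨ H.Adj a b ∨ H.Adj a b') := by
  constructor
  · intro hne
    by_contra hc
    push_neg at hc
    obtain ⟨h1, h2, h3, h4⟩ := hc
    rw [jdist_ss_two h1 h3, jdist_ss_two h2 h4] at hne
    exact hne rfl
  · intro hd
    rcases eq_or_ne a b with rfl | h1
    · rw [(joinK1 H).dist_self, jdist_ss_adj hbb']; omega
    rcases eq_or_ne a b' with rfl | h2
    · rw [jdist_ss_adj hbb'.symm, (joinK1 H).dist_self]; omega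
    rcases hd with rfl | rfl | h | h
    · exact absurd rfl h1
    · exact absurd rfl h2
    · have hn : ¬ H.Adj a b' := fun h' => tri_free C h h' hbb'
      rw [jdist_ss_adj h, jdist_ss_two h2 hn]; omega
    · have hn : ¬ H.Adj a b := fun h' => tri_free C h' h hbb'
      rw [jdist_ss_two h1 hn, jdist_ss_adj h]; omega

/-- step-down lemma for edist -/
lemma edist_succ {x y : β} {n : ℕ} (h : H.edist x y = (n + 1 : ℕ)) :
    ∃ z, H.Adj z y ∧ H.edist x z = n := by
  obtain ⟨p, hp⟩ := exists_walk_of_edist_eq_coe h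
  cases hq : p.reverse with
  | nil =>
      have := congrArg Walk.length hq
      simp [hp] at this
  | cons hadj q =>
      rename_i z
      refine ⟨z, hadj.symm, ?_⟩
      have hql : q.length = n := by
        have := congrArg Walk.length hq
        simp [hp] at this
        omega
      have hle : H.edist x z ≤ n := by
        have := edist_le q.reverse
        simpa [hql] using this
      have hge : (n : ℕ∞) ≤ H.edist x z := by
        have h1 : H.edist x y ≤ H.edist x z + H.edist z y := H.edist_triangle
        have h2 : H.edist z y ≤ 1 := by
          rw [edist_eq_one_iff_adj.mpr hadj.symm]
        have h3 : (n : ℕ∞) + 1 ≤ H.edist x z + 1 := by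
          calc (n : ℕ∞) + 1 = H.edist x y := by rw [h]; push_cast; ring
          _ ≤ H.edist x z + H.edist z y := h1
          _ ≤ H.edist x z + 1 := by exact add_le_add (le_refl _) h2
        exact (ENat.add_le_add_iff_right (by simp)).mp h3
      exact le_antisymm hle hge

lemma edist_two {x w : β} (h : H.edist x w = 2) : ∃ z, H.Adj x z ∧ H.Adj z w := by
  have h' : H.edist x w = ((1 + 1 : ℕ) : ℕ∞) := by rw [h]; norm_cast
  obtain ⟨z, hzw, hz⟩ := edist_succ h'
  exact ⟨z, edist_eq_one_iff_adj.mp (by exact_mod_cast hz), hzw⟩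

/-- parity along walks -/
lemma walk_parity (C : H.Coloring (Fin 2)) {u v : β} (w : H.Walk u v) :
    (if C v = 0 then (0 : ZMod 2) else 1) =
      (if C u = 0 then (0 : ZMod 2) else 1) + (w.length : ZMod 2) := by
  induction w with
  | nil => simp
  | cons hadj p ih =>
      have hstep : ∀ i j : Fin 2, i ≠ j →
          (if j = 0 then (0 : ZMod 2) else 1) = (if i = 0 then (0 : ZMod 2) else 1) + 1 := by
        decide
      rw [ih]
      rw [hstep _ _ (C.valid hadj)]
      push_cast [Walk.length_cons]
      ring

lemma edist_parity (C : H.Coloring (Fin 2)) {x b b' : β} (hadj : H.Adj b b')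
    (hb : H.edist x b ≠ ⊤) (hb' : H.edist x b' ≠ ⊤) : H.edist x b ≠ H.edist x b' := by
  intro he
  obtain ⟨p, hp⟩ := exists_walk_of_edist_ne_top hb
  obtain ⟨q, hq⟩ := exists_walk_of_edist_ne_top hb'
  have hl : p.length = q.length := by
    have : (p.length : ℕ∞) = (q.length : ℕ∞) := by rw [hp, hq, he]
    exact_mod_cast this
  have h1 := walk_parity C p
  have h2 := walk_parity C q
  rw [hl] at h1
  have heq : (if C b = 0 then (0 : ZMod 2) else 1) = (if C b' = 0 then (0 : ZMod 2) else 1) := by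
    rw [h1, h2]
  have hgen : ∀ i j : Fin 2, i ≠ j →
      ¬ ((if i = 0 then (0 : ZMod 2) else 1) = (if j = 0 then (0 : ZMod 2) else 1)) := by decide
  exact hgen _ _ (C.valid hadj) heq

lemma exists_central [Fintype β] [Nonempty β] (H : SimpleGraph β) :
    ∃ x, ecc H x = gradius H := by
  obtain ⟨x, -, hx⟩ := Finset.exists_min_image Finset.univ (ecc H)
    ⟨Classical.arbitrary β, Finset.mem_univ _⟩
  exact ⟨x, le_antisymm (le_iInf fun y => hx y (Finset.mem_univ y)) (iInf_le _ x)⟩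

lemma ecc_attained [Fintype β] [Nonempty β] (H : SimpleGraph β) (x : β) :
    ∃ y, H.edist x y = ecc H x := by
  obtain ⟨y, -, hy⟩ := Finset.exists_max_image Finset.univ (H.edist x)
    ⟨Classical.arbitrary β, Finset.mem_univ _⟩
  exact ⟨y, le_antisymm (le_iSup (fun z => H.edist x z) y)
    (iSup_le fun z => hy z (Finset.mem_univ z))⟩

lemma ecc_le {x : β} (h : ecc H x = 3) (y : β) : H.edist x y ≤ 3 := by
  rw [← h, ecc]; exact le_iSup (fun z => H.edist x z) y

lemma ecc_ne_top {x : β} (h : ecc H x = 3) (y : β) : H.edist x y ≠ ⊤ := by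
  intro h'
  have := ecc_le h y
  rw [h'] at this
  exact absurd this (by decide)

lemma exists_dist2 [Fintype β] [Nonempty β] {x : β} (h : ecc H x = 3) :
    ∃ w, H.edist x w = 2 := by
  obtain ⟨y, hy⟩ := ecc_attained H x
  rw [h] at hy
  have hy' : H.edist x y = ((1 + 1 + 1 : ℕ) : ℕ∞) := by rw [hy]; norm_cast
  obtain ⟨z, -, hz⟩ := edist_succ hy'
  exact ⟨z, by rw [hz]; norm_cast⟩

/-- an edge is always "hit" by a dominating set of a central vertex -/
lemma edge_hit [Fintype β] [Nonempty β] (C : H.Coloring (Fin 2)) {x : β}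
    (hx3 : ecc H x = 3) (A : Finset β) (hAsub : ∀ a ∈ A, H.Adj x a)
    (hAdom : ∀ w : β, H.edist x w = 2 → w ∉ A → ∃ a ∈ A, H.Adj a w)
    {b b' : β} (hbb' : H.Adj b b') :
    ∃ a ∈ A, (a = b ∨ a = b' ∨ H.Adj a b ∨ H.Adj a b') := by
  have hAne : ∃ a, a ∈ A := by
    obtain ⟨w, hw⟩ := exists_dist2 hx3
    by_cases hwA : w ∈ A
    · exact ⟨w, hwA⟩
    · obtain ⟨a, ha, -⟩ := hAdom w hw hwA
      exact ⟨a, ha⟩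
  have hdom2 : ∀ w ∈ ({b, b'} : Set β), H.edist x w = 2 →
      ∃ a ∈ A, (a = w ∨ H.Adj a w) := by
    intro w _ hw
    by_cases hwA : w ∈ A
    · exact ⟨w, hwA, Or.inl rfl⟩
    · obtain ⟨a, ha, haw⟩ := hAdom w hw hwA
      exact ⟨a, ha, Or.inr haw⟩
  set k := (H.edist x b).toNat with hkdef
  set k' := (H.edist x b').toNat with hkdef'
  have hk : (k : ℕ∞) = H.edist x b := ENat.coe_toNat (ecc_ne_top hx3 b)
  have hk' : (k' : ℕ∞) = H.edist x b' := ENat.coe_toNat (ecc_ne_top hx3 b')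
  have hne : k ≠ k' := by
    intro h
    exact edist_parity C hbb' (ecc_ne_top hx3 b) (ecc_ne_top hx3 b')
      (by rw [← hk, ← hk', h])
  have htri1 : (k' : ℕ) ≤ k + 1 := by
    have h1 : H.edist x b' ≤ H.edist x b + H.edist b b' := H.edist_triangle
    rw [edist_eq_one_iff_adj.mpr hbb', ← hk, ← hk'] at h1
    exact_mod_cast h1
  have htri2 : (k : ℕ) ≤ k' + 1 := by
    have h1 : H.edist x b ≤ H.edist x b' + H.edist b' b := H.edist_triangle
    rw [edist_eq_one_iff_adj.mpr hbb'.symm, ← hk, ← hk'] at h1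
    exact_mod_cast h1
  have hb3 : (k : ℕ) ≤ 3 := by
    have := ecc_le hx3 b; rw [← hk] at this; exact_mod_cast this
  have hb3' : (k' : ℕ) ≤ 3 := by
    have := ecc_le hx3 b'; rw [← hk'] at this; exact_mod_cast this
  rcases lt_or_gt_of_ne hne with hlt | hlt
  · -- k < k', so k' = k + 1 and k ≤ 2
    have hk2 : k ≤ 2 := by omega
    interval_cases k
    · -- b = x
      have hbx : x = b := edist_eq_zero_iff.mp (by rw [← hk]; rfl)
      obtain ⟨a, ha⟩ := hAne
      exact ⟨a, ha, Or.inr (Or.inr (Or.inl (hbx ▸ (hAsub a ha).symm)))⟩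
    · -- k = 1, k' = 2
      have hk'2 : k' = 2 := by omega
      have h2 : H.edist x b' = 2 := by rw [← hk', hk'2]; rfl
      obtain ⟨a, ha, h⟩ := hdom2 b' (by simp) h2
      rcases h with rfl | h
      · exact ⟨a, ha, Or.inr (Or.inl rfl)⟩
      · exact ⟨a, ha, Or.inr (Or.inr (Or.inr h))⟩
    · -- k = 2
      have h2 : H.edist x b = 2 := by rw [← hk]; rfl
      obtain ⟨a, ha, h⟩ := hdom2 b (by simp) h2
      rcases h with rfl | h
      · exact ⟨a, ha, Or.inl rfl⟩
      · exact ⟨a, ha, Or.inr (Or.inr (Or.inl h))⟩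
  · have hk2 : k' ≤ 2 := by omega
    interval_cases k'
    · have hbx : x = b' := edist_eq_zero_iff.mp (by rw [← hk']; norm_cast)
      obtain ⟨a, ha⟩ := hAne
      exact ⟨a, ha, Or.inr (Or.inr (Or.inr (hbx ▸ (hAsub a ha).symm)))⟩
    · have hk2' : k = 2 := by omega
      have h2 : H.edist x b = 2 := by rw [← hk, hk2']; rfl
      obtain ⟨a, ha, h⟩ := hdom2 b (by simp) h2
      rcases h with rfl | h
      · exact ⟨a, ha, Or.inl rfl⟩
      · exact ⟨a, ha, Or.inr (Or.inr (Or.inl h))⟩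
    · have h2 : H.edist x b' = 2 := by rw [← hk']; rfl
      obtain ⟨a, ha, h⟩ := hdom2 b' (by simp) h2
      rcases h with rfl | h
      · exact ⟨a, ha, Or.inr (Or.inl rfl)⟩
      · exact ⟨a, ha, Or.inr (Or.inr (Or.inr h))⟩

end Aux

/-- For a bipartite graph `H` of radius three,
`dim_l (K₁ + H) ≤ δ'(H) + 1`, with equality iff the vertex of `K₁` belongs to some local
metric basis of `K₁ + H`. -/
theorem stmt19 {β : Type*} [Fintype β] [Nonempty β] (H : SimpleGraph β)
    (hbip : H.Colorable 2) (hr : gradius H = 3) :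
    localMetricDim (joinK1 H) ≤ deltaPrime H + 1 ∧
    (localMetricDim (joinK1 H) = deltaPrime H + 1 ↔
      ∃ S : Finset (Option β), IsLocalMetricBasis (joinK1 H) S ∧ none ∈ S) := by
  classical
  obtain ⟨C⟩ := hbip
  obtain ⟨u, hu⟩ := exists_central H
  have hu3 : ecc H u = 3 := by rw [hu, hr]
  have hDne : {k | ∃ x : β, ecc H x = gradius H ∧ ∃ A : Finset β, A.card = k ∧
      (∀ a ∈ A, H.Adj x a) ∧
      ∀ w : β, H.edist x w = 2 → w ∉ A → ∃ a ∈ A, H.Adj a w}.Nonempty := by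
    refine ⟨(Finset.univ.filter (fun a => H.Adj u a)).card, u, hu, _, rfl, ?_, ?_⟩
    · intro a ha; exact (Finset.mem_filter.mp ha).2
    · intro w hw _
      obtain ⟨z, hz1, hz2⟩ := edist_two hw
      exact ⟨z, Finset.mem_filter.mpr ⟨Finset.mem_univ z, hz1⟩, hz2⟩
  obtain ⟨x, hx, A, hAcard, hAsub, hAdom⟩ := Nat.sInf_mem hDne
  have hx3 : ecc H x = 3 := by rw [hx, hr]
  set S0 : Finset (Option β) := insert none (A.image some) with hS0
  have hS0card : S0.card = deltaPrime H + 1 := by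
    rw [hS0, Finset.card_insert_of_notMem (by simp),
      Finset.card_image_of_injective _ (Option.some_injective β)]
    rw [hAcard]; rfl
  have hS0gen : IsLocalMetricGenerator (joinK1 H) ↑S0 := by
    intro p q hpq
    match p, q with
    | none, none => exact absurd hpq jnadj_nn
    | none, some b =>
        refine ⟨none, Finset.mem_coe.mpr (Finset.mem_insert_self _ _), ?_⟩
        rw [(joinK1 H).dist_self, jdist_ns]; omega
    | some b, none =>
        refine ⟨none, Finset.mem_coe.mpr (Finset.mem_insert_self _ _), ?_⟩
        rw [(joinK1 H).dist_self, jdist_ns]; omega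
    | some b, some b' =>
        have hbb' := jadj_ss.mp hpq
        obtain ⟨a, ha, hd⟩ := edge_hit C hx3 A hAsub hAdom hbb'
        exact ⟨some a,
          Finset.mem_coe.mpr (Finset.mem_insert_of_mem (Finset.mem_image_of_mem some ha)),
          (key C hbb' a).mpr hd⟩
  have hle : localMetricDim (joinK1 H) ≤ deltaPrime H + 1 :=
    Nat.sInf_le ⟨S0, hS0card, hS0gen⟩
  refine ⟨hle, ?_, ?_⟩
  · intro heq
    exact ⟨S0, ⟨hS0gen, by rw [hS0card, heq]⟩, Finset.mem_insert_self _ _⟩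
  · rintro ⟨S, hSb, hnone⟩
    have hTkey : ∀ a a' : Option β, ∀ b : β, b ∈ id a → b ∈ id a' → a = a' := by
      intro a a' b h1 h2; cases a <;> cases a' <;> simp_all
    set T : Finset β := S.filterMap id hTkey with hT
    have hmemT : ∀ b : β, b ∈ T ↔ some b ∈ S := by
      intro b; simp [hT, Finset.mem_filterMap]
    have hSeq : S = insert none (T.image some) := by
      ext o
      cases o with
      | none => simp [hnone]
      | some b => simp [Finset.mem_insert, Finset.mem_image, hmemT b]
    have hScard : S.card = T.card + 1 := by
      rw [hSeq, Finset.card_insert_of_notMem (by simp),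
        Finset.card_image_of_injective _ (Option.some_injective β)]
    have hdomE : ∀ b b' : β, H.Adj b b' →
        ∃ a ∈ T, (a = b ∨ a = b' ∨ H.Adj a b ∨ H.Adj a b') := by
      intro b b' h
      obtain ⟨v, hvS, hvd⟩ := hSb.1 (some b) (some b') (jadj_ss.mpr h)
      match v with
      | none => rw [jdist_ns, jdist_ns] at hvd; exact absurd rfl hvd
      | some a => exact ⟨a, (hmemT a).mpr (Finset.mem_coe.mp hvS), (key C h a).mp hvd⟩
    by_cases hcase : ∃ b₀ : β, ∀ a ∈ T, H.Adj b₀ a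
    · obtain ⟨b₀, hb₀⟩ := hcase
      have hnbr : ∀ y : β, ∃ z, H.Adj z y := by
        intro y
        set m := (H.edist u y).toNat with hm
        have hmk : (m : ℕ∞) = H.edist u y := ENat.coe_toNat (ecc_ne_top hu3 y)
        rcases Nat.eq_zero_or_pos m with h0 | hpos
        · have hyu : u = y := edist_eq_zero_iff.mp (by rw [← hmk, h0]; rfl)
          obtain ⟨w, hw⟩ := exists_dist2 hu3
          obtain ⟨z, hz1, hz2⟩ := edist_two hw
          exact ⟨z, hyu ▸ hz1.symm⟩
        · obtain ⟨n, hn⟩ := Nat.exists_eq_succ_of_ne_zero (Nat.pos_iff_ne_zero.mp hpos)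
          have hh : H.edist u y = ((n + 1 : ℕ) : ℕ∞) := by rw [← hmk, hn]
          obtain ⟨z, hz, -⟩ := edist_succ hh
          exact ⟨z, hz⟩
      have heccb_le : ecc H b₀ ≤ 3 := by
        rw [ecc]
        refine iSup_le fun y => ?_
        rcases eq_or_ne y b₀ with rfl | hyne
        · rw [SimpleGraph.edist_self]; exact zero_le
        obtain ⟨z, hzy⟩ := hnbr y
        obtain ⟨a, haT, hd⟩ := hdomE z y hzy
        have h1 : H.edist b₀ a = 1 := edist_eq_one_iff_adj.mpr (hb₀ a haT)
        have h2 : H.edist a y ≤ 2 := by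
          rcases hd with rfl | rfl | h | h
          · rw [edist_eq_one_iff_adj.mpr hzy]; exact one_le_two
          · rw [SimpleGraph.edist_self]; exact zero_le
          · calc H.edist a y ≤ H.edist a z + H.edist z y := H.edist_triangle
              _ ≤ 1 + 1 := add_le_add (le_of_eq (edist_eq_one_iff_adj.mpr h))
                  (le_of_eq (edist_eq_one_iff_adj.mpr hzy))
              _ ≤ 2 := by decide
          · rw [edist_eq_one_iff_adj.mpr h]; exact one_le_two
        calc H.edist b₀ y ≤ H.edist b₀ a + H.edist a y := H.edist_triangle
          _ ≤ 1 + 2 := add_le_add (le_of_eq h1) h2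
          _ = 3 := by decide
      have heccb : ecc H b₀ = gradius H := by
        rw [hr]; exact le_antisymm heccb_le (by rw [← hr]; exact iInf_le _ b₀)
      have hdomT : ∀ w : β, H.edist b₀ w = 2 → w ∉ T → ∃ a ∈ T, H.Adj a w := by
        intro w hw hwT
        obtain ⟨z, hbz, hzw⟩ := edist_two hw
        obtain ⟨a, haT, hd⟩ := hdomE z w hzw
        rcases hd with rfl | rfl | h | h
        · exact ⟨a, haT, hzw⟩
        · exact absurd haT hwT
        · exact (tri_free C (hb₀ a haT) hbz h).elim
        · exact ⟨a, haT, h⟩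
      have hdple : deltaPrime H ≤ T.card :=
        Nat.sInf_le ⟨b₀, heccb, T, rfl, hb₀, hdomT⟩
      have hdim : localMetricDim (joinK1 H) = S.card := hSb.2.symm
      omega
    · push_neg at hcase
      exfalso
      have hgen' : IsLocalMetricGenerator (joinK1 H) ↑(T.image some) := by
        intro p q hpq
        match p, q with
        | none, none => exact absurd hpq jnadj_nn
        | none, some b =>
            obtain ⟨a, haT, hna⟩ := hcase b
            refine ⟨some a, Finset.mem_coe.mpr (Finset.mem_image_of_mem some haT), ?_⟩
            rw [jdist_sn]
            rcases eq_or_ne a b with rfl | hne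
            · rw [(joinK1 H).dist_self]; omega
            · rw [jdist_ss_two hne (fun h => hna h.symm)]; omega
        | some b, none =>
            obtain ⟨a, haT, hna⟩ := hcase b
            refine ⟨some a, Finset.mem_coe.mpr (Finset.mem_image_of_mem some haT), ?_⟩
            rw [jdist_sn]
            rcases eq_or_ne a b with rfl | hne
            · rw [(joinK1 H).dist_self]; omega
            · rw [jdist_ss_two hne (fun h => hna h.symm)]; omega
        | some b, some b' =>
            have hbb' := jadj_ss.mp hpq
            obtain ⟨a, haT, hd⟩ := hdomE b b' hbb'
            exact ⟨some a, Finset.mem_coe.mpr (Finset.mem_image_of_mem some haT),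
              (key C hbb' a).mpr hd⟩
      have hlt : localMetricDim (joinK1 H) ≤ T.card :=
        Nat.sInf_le ⟨T.image some,
          Finset.card_image_of_injective _ (Option.some_injective β), hgen'⟩
      have hdim : localMetricDim (joinK1 H) = S.card := hSb.2.symm
      omega
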